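/- Let σ : [0,∞) → {1,2,3,4} be a measurable switching signal such that for each s ∈ {1,2,3,4} the occupation fraction converges: (1/t)·Leb{τ ∈ [0,t] : σ(τ) = s} → p_s as t → ∞. Let X : [0,∞) → ℝ² be continuous with X(t) = X(0) + ∫₀ᵗ G(σ(τ), X(τ)) dτ for all t ≥ 0, X(t) ∈ M := [x̄₁,∞)×[x̄₂,∞) for all t ≥ 0, and X(t)/t → 0 componentwise as t → ∞. Then η·(p₂/(1+exp(−β·x̄₂)) + p₄/2) ≤ F₁ and η·(p₃/(1+exp(−β·x̄₁)) + p₄/2) ≤ F₂. -/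

import Mathlib

open Real Set MeasureTheory Filter

/-- Inflow function `μ_k(s, x)` for modes `s ∈ {1,2,3,4}` (indexed `0..3`) and links
`k ∈ {1,2}` (indexed `0..1`). -/
noncomputable def mu (β η : ℝ) (s : Fin 4) (k : Fin 2) (x : ℝ × ℝ) : ℝ :=
  match s.val, k.val with
  | 0, 0 => η * Real.exp (-β * x.1) / (Real.exp (-β * x.1) + Real.exp (-β * x.2))
  | 0, _ => η * Real.exp (-β * x.2) / (Real.exp (-β * x.1) + Real.exp (-β * x.2))
  | 1, 0 => η / (1 + Real.exp (-β * x.2))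
  | 1, _ => η * Real.exp (-β * x.2) / (1 + Real.exp (-β * x.2))
  | 2, 0 => η * Real.exp (-β * x.1) / (Real.exp (-β * x.1) + 1)
  | 2, _ => η / (Real.exp (-β * x.1) + 1)
  | _, _ => η / 2

/-- Outflow (sending) function `f_k(y) = F_k (1 - e^{-y})` of link `k`. -/
noncomputable def fOut (F : Fin 2 → ℝ) (k : Fin 2) (y : ℝ) : ℝ :=
  F k * (1 - Real.exp (-y))

/-- The mode-`s` vector field `G(s,x) = (μ₁(s,x) − f₁(x₁), μ₂(s,x) − f₂(x₂))`. -/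
noncomputable def Gvec (β η : ℝ) (F : Fin 2 → ℝ) (s : Fin 4) (x : ℝ × ℝ) : ℝ × ℝ :=
  (mu β η s 0 x - fOut F 0 x.1, mu β η s 1 x - fOut F 1 x.2)

/-- The `k`-th coordinate of `x ∈ ℝ²`. -/
def coord (x : ℝ × ℝ) (k : Fin 2) : ℝ := if k = 0 then x.1 else x.2

/-! ### Auxiliary lemmas -/

lemma mu_continuous (β η : ℝ) (s : Fin 4) (k : Fin 2) :
    Continuous fun x : ℝ × ℝ => mu β η s k x := by
  fin_cases s <;> fin_cases k <;> simp only [mu] <;>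
    fun_prop (disch := intro x; positivity)

lemma mu_nonneg {β η : ℝ} (hη : 0 ≤ η) (s : Fin 4) (k : Fin 2) (x : ℝ × ℝ) :
    0 ≤ mu β η s k x := by
  fin_cases s <;> fin_cases k <;> simp only [mu] <;> positivity

lemma mu_le {β η : ℝ} (hη : 0 ≤ η) (s : Fin 4) (k : Fin 2) (x : ℝ × ℝ) :
    mu β η s k x ≤ η := by
  fin_cases s <;> fin_cases k <;> simp only [mu] <;>
    rw [div_le_iff₀ (by positivity)] <;>
    nlinarith [exp_pos (-β * x.1), exp_pos (-β * x.2)]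

lemma fOut_nonneg {F : Fin 2 → ℝ} {k : Fin 2} (hF : 0 ≤ F k) {y : ℝ} (hy : 0 ≤ y) :
    0 ≤ fOut F k y := by
  have h : Real.exp (-y) ≤ 1 := by
    rw [Real.exp_le_one_iff]; linarith
  unfold fOut; nlinarith

lemma fOut_le {F : Fin 2 → ℝ} {k : Fin 2} (hF : 0 ≤ F k) (y : ℝ) : fOut F k y ≤ F k := by
  have h := Real.exp_pos (-y)
  unfold fOut; nlinarith

lemma meas_eq (σ : ℝ → Fin 4) (s : Fin 4) {t : ℝ} :
    volume (σ ⁻¹' {s} ∩ Set.Ioc 0 t) = volume {τ : ℝ | τ ∈ Set.Icc 0 t ∧ σ τ = s} := by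
  apply le_antisymm
  · apply measure_mono
    rintro τ ⟨hs, h0, h1⟩
    exact ⟨⟨le_of_lt h0, h1⟩, hs⟩
  · calc volume {τ : ℝ | τ ∈ Set.Icc 0 t ∧ σ τ = s}
        ≤ volume (σ ⁻¹' {s} ∩ Set.Ioc 0 t ∪ {0}) := by
          apply measure_mono
          rintro τ ⟨⟨h0, h1⟩, hs⟩
          rcases eq_or_lt_of_le h0 with h | h
          · exact Or.inr (by simp [← h])
          · exact Or.inl ⟨hs, h, h1⟩
      _ ≤ volume (σ ⁻¹' {s} ∩ Set.Ioc 0 t) + volume ({0} : Set ℝ) := measure_union_le _ _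
      _ = volume (σ ⁻¹' {s} ∩ Set.Ioc 0 t) := by simp

lemma sigma_decomp (σ : ℝ → Fin 4) (v : Fin 4 → ℝ → ℝ) :
    (fun τ => v (σ τ) τ) = fun τ => ∑ s : Fin 4, (σ ⁻¹' {s}).indicator (v s) τ := by
  funext τ
  rw [Finset.sum_eq_single (σ τ)]
  · simp [Set.indicator_apply]
  · intro s _ hs
    refine Set.indicator_of_notMem (fun h => ?_) _
    exact hs (Set.mem_singleton_iff.1 h).symm
  · simp

lemma integrableOn_of_bdd {g : ℝ → ℝ} {C t : ℝ} (ht : 0 ≤ t)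
    (hm : AEStronglyMeasurable g (volume.restrict (Set.Ioc 0 t)))
    (hbd : ∀ τ : ℝ, 0 ≤ τ → |g τ| ≤ C) : IntegrableOn g (Set.Ioc 0 t) volume := by
  have hIoc : volume (Set.Ioc (0:ℝ) t) < ⊤ := by simp [Real.volume_Ioc]
  apply Integrable.mono' (integrableOn_const hIoc.ne : IntegrableOn (fun _ : ℝ => C) _ _) hm
  filter_upwards [ae_restrict_mem measurableSet_Ioc] with τ hτ
  simpa [Real.norm_eq_abs] using hbd τ hτ.1.le

/-- Key Cesàro-averaging lemma: if `Y t = ∫₀ᵗ g`, `g` is bounded and measurable, bounded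
below by `w (σ τ) - F0` along the signal, and `Y t / t → 0`, then `∑ s w s p s ≤ F0`. -/
lemma key (σ : ℝ → Fin 4) (hσ : Measurable σ) (p : Fin 4 → ℝ)
    (hfrac : ∀ s : Fin 4, Filter.Tendsto
      (fun t : ℝ => (volume {τ : ℝ | τ ∈ Set.Icc 0 t ∧ σ τ = s}).toReal / t)
      Filter.atTop (nhds (p s)))
    (g : ℝ → ℝ) (C F0 : ℝ) (w : Fin 4 → ℝ)
    (hm : ∀ t : ℝ, 0 ≤ t → AEStronglyMeasurable g (volume.restrict (Set.Ioc 0 t)))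
    (hbd : ∀ τ : ℝ, 0 ≤ τ → |g τ| ≤ C)
    (hlow : ∀ τ : ℝ, 0 ≤ τ → w (σ τ) - F0 ≤ g τ)
    (Y : ℝ → ℝ)
    (hY : ∀ t : ℝ, 0 ≤ t → Y t = ∫ τ in (0:ℝ)..t, g τ)
    (hYsub : Filter.Tendsto (fun t => Y t / t) Filter.atTop (nhds 0)) :
    (∑ s : Fin 4, w s * p s) ≤ F0 := by
  set a : Fin 4 → ℝ → ℝ := fun s t => (volume {τ : ℝ | τ ∈ Set.Icc 0 t ∧ σ τ = s}).toReal
    with ha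
  have step : ∀ t : ℝ, 0 < t → (∑ s : Fin 4, w s * a s t) - F0 * t ≤ Y t := by
    intro t ht
    have ht' : (0:ℝ) ≤ t := ht.le
    have hIoc : volume (Set.Ioc (0:ℝ) t) < ⊤ := by simp [Real.volume_Ioc]
    have hconst : ∀ c : ℝ, IntegrableOn (fun _ : ℝ => c) (Set.Ioc 0 t) volume :=
      fun c => integrableOn_const hIoc.ne
    have hgint : IntegrableOn g (Set.Ioc 0 t) volume := integrableOn_of_bdd ht' (hm t ht') hbd
    have hwmeas : ∀ s : Fin 4, MeasurableSet (σ ⁻¹' {s}) := fun s =>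
      hσ (measurableSet_singleton s)
    have hindint : ∀ s : Fin 4,
        IntegrableOn ((σ ⁻¹' {s}).indicator (fun _ => w s)) (Set.Ioc 0 t) volume :=
      fun s => (hconst (w s)).indicator (hwmeas s)
    have hwint : IntegrableOn (fun τ => w (σ τ)) (Set.Ioc 0 t) volume := by
      rw [sigma_decomp σ (fun s _ => w s)]
      exact integrable_finset_sum _ fun s _ => hindint s
    have hhint : IntegrableOn (fun τ => w (σ τ) - F0) (Set.Ioc 0 t) volume :=
      hwint.sub (hconst F0)
    have hcomp : ∫ τ in (0:ℝ)..t, (w (σ τ) - F0) ≤ ∫ τ in (0:ℝ)..t, g τ := by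
      apply intervalIntegral.integral_mono_on ht'
      · rw [intervalIntegrable_iff, uIoc_of_le ht']; exact hhint
      · rw [intervalIntegrable_iff, uIoc_of_le ht']; exact hgint
      · intro τ hτ; exact hlow τ hτ.1
    have hcompute : ∫ τ in (0:ℝ)..t, (w (σ τ) - F0)
        = (∑ s : Fin 4, w s * a s t) - F0 * t := by
      rw [intervalIntegral.integral_of_le ht', integral_sub hwint (hconst F0)]
      have h1 : ∫ τ in Set.Ioc (0:ℝ) t, w (σ τ) = ∑ s : Fin 4, w s * a s t := by
        conv_lhs => rw [sigma_decomp σ (fun s _ => w s)]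
        rw [integral_finset_sum _ fun s _ => hindint s]
        refine Finset.sum_congr rfl fun s _ => ?_
        rw [integral_indicator_const _ (hwmeas s), measureReal_def, Measure.restrict_apply (hwmeas s),
          meas_eq σ s, smul_eq_mul, mul_comm]
      rw [h1]
      simp [Real.volume_Ioc, ht', mul_comm]
    rw [hY t ht', ← hcompute]
    exact hcomp
  have hineq : ∀ᶠ t in atTop, (∑ s : Fin 4, w s * (a s t / t)) - F0 ≤ Y t / t := by
    filter_upwards [eventually_gt_atTop (0:ℝ)] with t ht
    have h3 : (∑ s : Fin 4, w s * a s t - F0 * t) / t ≤ Y t / t :=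
      (div_le_div_iff_of_pos_right ht).2 (step t ht)
    have h4 : (∑ s : Fin 4, w s * a s t - F0 * t) / t
        = ∑ s : Fin 4, w s * (a s t / t) - F0 := by
      rw [sub_div, Finset.sum_div]
      congr 1
      · exact Finset.sum_congr rfl fun s _ => mul_div_assoc _ _ _
      · exact mul_div_cancel_right₀ F0 (ne_of_gt ht)
    rw [← h4]
    exact h3
  have hlim : Filter.Tendsto (fun t => (∑ s : Fin 4, w s * (a s t / t)) - F0)
      Filter.atTop (nhds ((∑ s : Fin 4, w s * p s) - F0)) :=
    (tendsto_finset_sum _ fun s _ => (hfrac s).const_mul (w s)).sub_const F0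
  have := le_of_tendsto_of_tendsto hlim hYsub hineq
  linarith

/-- trajectory-wise necessary condition for stability. If the switching signal
has occupation fractions `p_s`, the trajectory stays in `M = [x̄₁,∞) × [x̄₂,∞)` and grows
sublinearly, then `η (p₂/(1+e^{−β x̄₂}) + p₄/2) ≤ F₁` and `η (p₃/(1+e^{−β x̄₁}) + p₄/2) ≤ F₂`.
(Modes 1,2,3,4 are indexed by `Fin 4` as 0,1,2,3.) -/
theorem stmt12 (β η : ℝ) (F : Fin 2 → ℝ) (hβ : 0 < β) (hη : 0 < η)
    (hF : ∀ k, 0 < F k) (xb : Fin 2 → ℝ)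
    (hxb_nonneg : ∀ k, 0 ≤ xb k)
    (hxb_eq : ∀ k, η * Real.exp (-β * xb k) / (1 + Real.exp (-β * xb k)) =
      F k * (1 - Real.exp (-xb k)))
    (hxb_unique : ∀ k y, 0 ≤ y →
      η * Real.exp (-β * y) / (1 + Real.exp (-β * y)) = F k * (1 - Real.exp (-y)) → y = xb k)
    (σ : ℝ → Fin 4) (hσ : Measurable σ) (p : Fin 4 → ℝ)
    (hfrac : ∀ s : Fin 4, Filter.Tendsto
      (fun t : ℝ => (volume {τ : ℝ | τ ∈ Set.Icc 0 t ∧ σ τ = s}).toReal / t)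
      Filter.atTop (nhds (p s)))
    (X : ℝ → ℝ × ℝ) (hXcont : ContinuousOn X (Set.Ici (0 : ℝ)))
    (hXeq : ∀ t : ℝ, 0 ≤ t → X t = X 0 + ∫ τ in (0 : ℝ)..t, Gvec β η F (σ τ) (X τ))
    (hXM : ∀ t : ℝ, 0 ≤ t → X t ∈ Set.Ici (xb 0) ×ˢ Set.Ici (xb 1))
    (hX_sub1 : Filter.Tendsto (fun t : ℝ => (X t).1 / t) Filter.atTop (nhds 0))
    (hX_sub2 : Filter.Tendsto (fun t : ℝ => (X t).2 / t) Filter.atTop (nhds 0)) :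
    η * (p 1 / (1 + Real.exp (-β * xb 1)) + p 3 / 2) ≤ F 0 ∧
    η * (p 2 / (1 + Real.exp (-β * xb 0)) + p 3 / 2) ≤ F 1 := by
  have hX1 : ∀ τ : ℝ, 0 ≤ τ → xb 0 ≤ (X τ).1 := fun τ hτ => (hXM τ hτ).1
  have hX2 : ∀ τ : ℝ, 0 ≤ τ → xb 1 ≤ (X τ).2 := fun τ hτ => (hXM τ hτ).2
  -- continuity of the components of the vector field
  have hcont1 : ∀ s : Fin 4, Continuous fun x : ℝ × ℝ => (Gvec β η F s x).1 := fun s => by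
    simp only [Gvec]
    exact (mu_continuous β η s 0).sub ((by unfold fOut; fun_prop : Continuous (fOut F 0)).comp
      continuous_fst)
  have hcont2 : ∀ s : Fin 4, Continuous fun x : ℝ × ℝ => (Gvec β η F s x).2 := fun s => by
    simp only [Gvec]
    exact (mu_continuous β η s 1).sub ((by unfold fOut; fun_prop : Continuous (fOut F 1)).comp
      continuous_snd)
  -- measurability of the trajectory on bounded intervals
  have hXm : ∀ t : ℝ, 0 ≤ t → AEMeasurable X (volume.restrict (Set.Ioc 0 t)) := fun t _ =>
    (hXcont.aemeasurable measurableSet_Ici).mono_measure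
      (Measure.restrict_mono (fun τ hτ => hτ.1.le) le_rfl)
  have hm1 : ∀ t : ℝ, 0 ≤ t →
      AEStronglyMeasurable (fun τ => (Gvec β η F (σ τ) (X τ)).1)
        (volume.restrict (Set.Ioc 0 t)) := by
    intro t ht
    rw [sigma_decomp σ (fun s τ => (Gvec β η F s (X τ)).1)]
    exact (Finset.aemeasurable_fun_sum _ fun s _ =>
      (((hcont1 s).measurable.comp_aemeasurable (hXm t ht)).indicator
        (hσ (measurableSet_singleton s)))).aestronglyMeasurable
  have hm2 : ∀ t : ℝ, 0 ≤ t →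
      AEStronglyMeasurable (fun τ => (Gvec β η F (σ τ) (X τ)).2)
        (volume.restrict (Set.Ioc 0 t)) := by
    intro t ht
    rw [sigma_decomp σ (fun s τ => (Gvec β η F s (X τ)).2)]
    exact (Finset.aemeasurable_fun_sum _ fun s _ =>
      (((hcont2 s).measurable.comp_aemeasurable (hXm t ht)).indicator
        (hσ (measurableSet_singleton s)))).aestronglyMeasurable
  -- bounds
  have hbd1 : ∀ τ : ℝ, 0 ≤ τ → |(Gvec β η F (σ τ) (X τ)).1| ≤ η + F 0 := by
    intro τ hτ
    have h1 := mu_nonneg (β := β) hη.le (σ τ) 0 (X τ)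
    have h2 := mu_le (β := β) hη.le (σ τ) 0 (X τ)
    have h3 : (0:ℝ) ≤ (X τ).1 := le_trans (hxb_nonneg 0) (hX1 τ hτ)
    have h4 := fOut_nonneg (F := F) (k := 0) (hF 0).le h3
    have h5 := fOut_le (F := F) (k := 0) (hF 0).le (X τ).1
    simp only [Gvec]
    rw [abs_le]
    constructor <;> [linarith; linarith]
  have hbd2 : ∀ τ : ℝ, 0 ≤ τ → |(Gvec β η F (σ τ) (X τ)).2| ≤ η + F 1 := by
    intro τ hτ
    have h1 := mu_nonneg (β := β) hη.le (σ τ) 1 (X τ)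
    have h2 := mu_le (β := β) hη.le (σ τ) 1 (X τ)
    have h3 : (0:ℝ) ≤ (X τ).2 := le_trans (hxb_nonneg 1) (hX2 τ hτ)
    have h4 := fOut_nonneg (F := F) (k := 1) (hF 1).le h3
    have h5 := fOut_le (F := F) (k := 1) (hF 1).le (X τ).2
    simp only [Gvec]
    rw [abs_le]
    constructor <;> [linarith; linarith]
  -- interval integrability of the vector field along the trajectory
  have hpair : ∀ t : ℝ, 0 ≤ t →
      IntervalIntegrable (fun τ => Gvec β η F (σ τ) (X τ)) volume 0 t := by
    intro t ht
    rw [intervalIntegrable_iff, uIoc_of_le ht]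
    exact (integrableOn_of_bdd ht (hm1 t ht) hbd1).prodMk
      (integrableOn_of_bdd ht (hm2 t ht) hbd2)
  -- coordinates of the integral equation
  have hY1 : ∀ t : ℝ, 0 ≤ t →
      (X t).1 - (X 0).1 = ∫ τ in (0:ℝ)..t, (Gvec β η F (σ τ) (X τ)).1 := by
    intro t ht
    have h2 := (ContinuousLinearMap.fst ℝ ℝ ℝ).intervalIntegral_comp_comm (hpair t ht)
    rw [hXeq t ht, Prod.fst_add, add_sub_cancel_left]
    simpa using h2.symm
  have hY2 : ∀ t : ℝ, 0 ≤ t →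
      (X t).2 - (X 0).2 = ∫ τ in (0:ℝ)..t, (Gvec β η F (σ τ) (X τ)).2 := by
    intro t ht
    have h2 := (ContinuousLinearMap.snd ℝ ℝ ℝ).intervalIntegral_comp_comm (hpair t ht)
    rw [hXeq t ht, Prod.snd_add, add_sub_cancel_left]
    simpa using h2.symm
  -- sublinearity of the shifted trajectory
  have hconstdiv : ∀ c : ℝ, Filter.Tendsto (fun t : ℝ => c / t) Filter.atTop (nhds 0) :=
    fun c => tendsto_const_nhds.div_atTop tendsto_id
  have hYsub1 : Filter.Tendsto (fun t : ℝ => ((X t).1 - (X 0).1) / t) Filter.atTop (nhds 0) := by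
    have := hX_sub1.sub (hconstdiv ((X 0).1))
    rw [sub_zero] at this
    simpa [sub_div] using this
  have hYsub2 : Filter.Tendsto (fun t : ℝ => ((X t).2 - (X 0).2) / t) Filter.atTop (nhds 0) := by
    have := hX_sub2.sub (hconstdiv ((X 0).2))
    rw [sub_zero] at this
    simpa [sub_div] using this
  constructor
  · -- first link
    set w : Fin 4 → ℝ := ![0, η / (1 + Real.exp (-β * xb 1)), 0, η / 2] with hw
    have hmulow : ∀ (s : Fin 4) (x : ℝ × ℝ), xb 1 ≤ x.2 → w s ≤ mu β η s 0 x := by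
      intro s x h2
      fin_cases s
      · simpa [hw] using mu_nonneg (β := β) hη.le 0 0 x
      · show η / (1 + Real.exp (-β * xb 1)) ≤ mu β η 1 0 x
        simp only [mu]
        have hden : 1 + Real.exp (-β * x.2) ≤ 1 + Real.exp (-β * xb 1) := by
          have := Real.exp_le_exp.2 (show -β * x.2 ≤ -β * xb 1 by nlinarith)
          linarith
        exact div_le_div_of_nonneg_left hη.le (by positivity) hden
      · simpa [hw] using mu_nonneg (β := β) hη.le 2 0 x
      · show η / 2 ≤ mu β η 3 0 x
        simp [mu]
    have hlow : ∀ τ : ℝ, 0 ≤ τ → w (σ τ) - F 0 ≤ (Gvec β η F (σ τ) (X τ)).1 := by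
      intro τ hτ
      have h1 := hmulow (σ τ) (X τ) (hX2 τ hτ)
      have h5 := fOut_le (F := F) (k := 0) (hF 0).le (X τ).1
      simp only [Gvec]
      linarith
    have hk := key σ hσ p hfrac _ (η + F 0) (F 0) w hm1 hbd1 hlow _ hY1 hYsub1
    calc η * (p 1 / (1 + Real.exp (-β * xb 1)) + p 3 / 2)
        = ∑ s : Fin 4, w s * p s := by
          rw [Fin.sum_univ_four]
          simp [hw]
          ring
      _ ≤ F 0 := hk
  · -- second link
    set w : Fin 4 → ℝ := ![0, 0, η / (1 + Real.exp (-β * xb 0)), η / 2] with hw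
    have hmulow : ∀ (s : Fin 4) (x : ℝ × ℝ), xb 0 ≤ x.1 → w s ≤ mu β η s 1 x := by
      intro s x h2
      fin_cases s
      · simpa [hw] using mu_nonneg (β := β) hη.le 0 1 x
      · simpa [hw] using mu_nonneg (β := β) hη.le 1 1 x
      · show η / (1 + Real.exp (-β * xb 0)) ≤ mu β η 2 1 x
        simp only [mu]
        rw [add_comm (Real.exp (-β * x.1)) 1]
        have hden : 1 + Real.exp (-β * x.1) ≤ 1 + Real.exp (-β * xb 0) := by
          have := Real.exp_le_exp.2 (show -β * x.1 ≤ -β * xb 0 by nlinarith)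
          linarith
        exact div_le_div_of_nonneg_left hη.le (by positivity) hden
      · show η / 2 ≤ mu β η 3 1 x
        simp [mu]
    have hlow : ∀ τ : ℝ, 0 ≤ τ → w (σ τ) - F 1 ≤ (Gvec β η F (σ τ) (X τ)).2 := by
      intro τ hτ
      have h1 := hmulow (σ τ) (X τ) (hX1 τ hτ)
      have h5 := fOut_le (F := F) (k := 1) (hF 1).le (X τ).2
      simp only [Gvec]
      linarith
    have hk := key σ hσ p hfrac _ (η + F 1) (F 1) w hm2 hbd2 hlow _ hY2 hYsub2
    calc η * (p 2 / (1 + Real.exp (-β * xb 0)) + p 3 / 2)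
        = ∑ s : Fin 4, w s * p s := by
          rw [Fin.sum_univ_four]
          simp [hw]
          ring
      _ ≤ F 1 := hk
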